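/- Let ζ be a primitive 42nd root of unity, K = ℚ(ζ), and 𝒪_K its ring of integers. Set π₁ = −ζ⁸ + ζ⁶ − ζ⁴ + ζ and π₂ = ζ⁹ + ζ⁸ + ζ⁴ + ζ³ − ζ − 1. Then the principal ideals (π₁) and (π₂) are distinct prime (maximal) ideals of 𝒪_K, and the ideal (7) factors as (7) = (π₁)⁶(π₂)⁶. -/

import Mathlib

open NumberField

open Polynomial Module in
private theorem phi42_norm_aux (K : Type*) [Field K] [NumberField K]
    [IsCyclotomicExtension {(42 : ℕ)} ℚ K]
    (z : K) (hz : IsPrimitiveRoot z (42 : ℕ))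
    (hroot : z ^ 12 + z ^ 11 - z ^ 9 - z ^ 8 + z ^ 6 - z ^ 4 - z ^ 3 + z + 1 = 0) (c : ℚ) :
    Algebra.norm ℚ (z - algebraMap ℚ K c) =
      (X ^ 12 + X ^ 11 - X ^ 9 - X ^ 8 + X ^ 6 - X ^ 4 - X ^ 3 + X + 1 : ℚ[X]).eval c := by
  set Φ : ℚ[X] := X ^ 12 + X ^ 11 - X ^ 9 - X ^ 8 + X ^ 6 - X ^ 4 - X ^ 3 + X + 1 with hΦdef
  have hΦmonic : Φ.Monic := by
    rw [hΦdef]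
    monicity!
  have hΦdeg : Φ.natDegree = 12 := by rw [hΦdef]; compute_degree!
  have hint : IsIntegral ℚ (z - algebraMap ℚ K c) :=
    (IsIntegral.of_finite ℚ z).sub isIntegral_algebraMap
  set x : K := z - algebraMap ℚ K c with hxdef
  let pb := IsPrimitiveRoot.powerBasis (n := (42 : ℕ)) ℚ hz
  have hmem : pb.gen ∈ Algebra.adjoin ℚ ({x} : Set K) := by
    have hg : pb.gen = z := IsPrimitiveRoot.powerBasis_gen ℚ hz
    rw [hg, Algebra.adjoin_singleton_eq_range_aeval]
    exact ⟨X + C c, by simp [hxdef]⟩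
  let pbc := PowerBasis.ofAdjoinEqTop hint (PowerBasis.adjoin_eq_top_of_gen_mem_adjoin hmem)
  have hgen : pbc.gen = x := by simp [pbc]
  have hdim : pbc.dim = (minpoly ℚ x).natDegree := by simp [pbc]
  have hfr : finrank ℚ K = 12 := by
    rw [IsCyclotomicExtension.finrank K (cyclotomic.irreducible_rat
      (n := (42 : ℕ)) (by norm_num))]
    rfl
  have hnd : (minpoly ℚ x).natDegree = 12 := by
    rw [← hdim, ← pbc.finrank, hfr]
  have haev : aeval x (Φ.comp (X + C c)) = 0 := by
    rw [aeval_comp]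
    have hxc : aeval x (X + C c) = z := by simp [hxdef]
    rw [hxc, hΦdef]
    simp only [map_add, map_sub, map_pow, aeval_X, map_one]
    linear_combination hroot
  have hcomp_monic : (Φ.comp (X + C c)).Monic := hΦmonic.comp_X_add_C c
  have hcompdeg : (Φ.comp (X + C c)).natDegree = 12 := by
    rw [natDegree_comp, hΦdeg]
    simp
  have hmin : minpoly ℚ x = Φ.comp (X + C c) := by
    refine eq_of_dvd_of_natDegree_le_of_leadingCoeff (minpoly.dvd ℚ x haev) ?_ ?_
    · rw [hcompdeg, hnd]
    · rw [(minpoly.monic hint).leadingCoeff, hcomp_monic.leadingCoeff]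
  have hnorm := Algebra.PowerBasis.norm_gen_eq_coeff_zero_minpoly pbc
  rw [hgen, hdim, hnd, hmin] at hnorm
  rw [hnorm, coeff_zero_eq_eval_zero, eval_comp]
  norm_num

theorem factorization_of_seven_in_cyclotomic42
    (K : Type*) [Field K] [NumberField K]
    [IsCyclotomicExtension {(42 : ℕ)} ℚ K]
    (ζ : 𝓞 K) (hζ : IsPrimitiveRoot ζ 42)
    (π₁ π₂ : 𝓞 K)
    (hπ₁ : π₁ = -ζ ^ 8 + ζ ^ 6 - ζ ^ 4 + ζ)
    (hπ₂ : π₂ = ζ ^ 9 + ζ ^ 8 + ζ ^ 4 + ζ ^ 3 - ζ - 1) :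
    Ideal.span {π₁} ≠ Ideal.span {π₂} ∧
    (Ideal.span {π₁}).IsMaximal ∧ (Ideal.span {π₂}).IsMaximal ∧
    Ideal.span {(7 : 𝓞 K)} = Ideal.span {π₁} ^ 6 * Ideal.span {π₂} ^ 6 := by
  -- basic power relations for the primitive 42nd root of unity
  have hz42 : ζ ^ 42 = 1 := hζ.pow_eq_one
  have h21 : ζ ^ 21 = -1 := by
    have hsq : (ζ ^ 21 - 1) * (ζ ^ 21 + 1) = 0 := by linear_combination hz42
    rcases mul_eq_zero.mp hsq with h | h
    · exact absurd (show ζ ^ 21 = 1 by linear_combination h)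
        (hζ.pow_ne_one_of_pos_of_lt (by norm_num) (by norm_num))
    · linear_combination h
  have h14 : ζ ^ 28 + ζ ^ 14 + 1 = 0 := by
    have hcube : (ζ ^ 14 - 1) * (ζ ^ 28 + ζ ^ 14 + 1) = 0 := by linear_combination hz42
    rcases mul_eq_zero.mp hcube with h | h
    · exact absurd (show ζ ^ 14 = 1 by linear_combination h)
        (hζ.pow_ne_one_of_pos_of_lt (by norm_num) (by norm_num))
    · exact h
  have h6 : ζ ^ 36 + ζ ^ 30 + ζ ^ 24 + ζ ^ 18 + ζ ^ 12 + ζ ^ 6 + 1 = 0 := by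
    have hsev : (ζ ^ 6 - 1) * (ζ ^ 36 + ζ ^ 30 + ζ ^ 24 + ζ ^ 18 + ζ ^ 12 + ζ ^ 6 + 1) = 0 := by
      linear_combination hz42
    rcases mul_eq_zero.mp hsev with h | h
    · exact absurd (show ζ ^ 6 = 1 by linear_combination h)
        (hζ.pow_ne_one_of_pos_of_lt (by norm_num) (by norm_num))
    · exact h
  -- the minimal (cyclotomic) relation of degree 12
  have hΦ : ζ ^ 12 + ζ ^ 11 - ζ ^ 9 - ζ ^ 8 + ζ ^ 6 - ζ ^ 4 - ζ ^ 3 + ζ + 1 = 0 := by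
    linear_combination (-ζ ^ 8 + ζ ^ 10 + ζ ^ 11 + ζ ^ 16 + ζ ^ 17 + ζ ^ 22 + ζ ^ 23 + ζ ^ 29) * h21
      + (ζ - ζ ^ 3 - ζ ^ 4 - ζ ^ 9 - ζ ^ 10 - ζ ^ 15 - ζ ^ 16 - ζ ^ 22) * h14 + h6
  -- the product π₁ π₂ reduces to ζ^5 + ζ^2
  have h12 : π₁ * π₂ = ζ ^ 5 + ζ ^ 2 := by
    rw [hπ₁, hπ₂]
    linear_combination (-ζ - ζ ^ 2 + ζ ^ 3 - ζ ^ 5) * hΦ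
  -- powers of ζ^5 + ζ^2
  have he3 : (ζ ^ 5 + ζ ^ 2) ^ 3 = (-3 : 𝓞 K) + (-4) * ζ + 3 * ζ ^ 3 + 3 * ζ ^ 4 + (-2) * ζ ^ 6
      + 4 * ζ ^ 8 + 6 * ζ ^ 9 + (-3) * ζ ^ 11 := by
    linear_combination (3 + ζ - ζ ^ 2 + ζ ^ 3) * hΦ
  set cv : 𝓞 K := (-3 : 𝓞 K) - ζ + (-2) * ζ ^ 3 + (-2) * ζ ^ 4 - ζ ^ 6 + ζ ^ 8 + 2 * ζ ^ 11
    with hcv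
  set dv : 𝓞 K := (-9 : 𝓞 K) + (-3) * ζ + 7 * ζ ^ 3 + 7 * ζ ^ 4 + (-3) * ζ ^ 6 + 3 * ζ ^ 8
    + (-7) * ζ ^ 11 with hdv
  have he6 : ((-3 : 𝓞 K) + (-4) * ζ + 3 * ζ ^ 3 + 3 * ζ ^ 4 + (-2) * ζ ^ 6 + 4 * ζ ^ 8
      + 6 * ζ ^ 9 + (-3) * ζ ^ 11) ^ 2 = 7 * cv := by
    rw [hcv]
    linear_combination (30 + ζ + 15 * ζ ^ 2 + 11 * ζ ^ 3 + (-8) * ζ ^ 4 + 24 * ζ ^ 6 + 12 * ζ ^ 7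
      + (-27) * ζ ^ 8 + (-9) * ζ ^ 9 + 9 * ζ ^ 10) * hΦ
  have hA : π₁ ^ 6 * π₂ ^ 6 = 7 * cv := by
    calc π₁ ^ 6 * π₂ ^ 6 = ((π₁ * π₂) ^ 3) ^ 2 := by ring
    _ = ((ζ ^ 5 + ζ ^ 2) ^ 3) ^ 2 := by rw [h12]
    _ = 7 * cv := by rw [he3, he6]
  have hcd : cv * dv = 1 := by
    rw [hcv, hdv]
    linear_combination (26 + (-8) * ζ + 11 * ζ ^ 2 + 12 * ζ ^ 3 + 2 * ζ ^ 4 + ζ ^ 6 - ζ ^ 7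
      + (-14) * ζ ^ 8 + 14 * ζ ^ 9 + (-14) * ζ ^ 10) * hΦ
  -- divisibility certificates
  have hd1 : π₁ ∣ ζ - 5 := by
    refine ⟨1 + (-2) * ζ - ζ ^ 2 - ζ ^ 4 + 3 * ζ ^ 5 - ζ ^ 6 + (-2) * ζ ^ 7 + (-2) * ζ ^ 8
      + (-2) * ζ ^ 9 - ζ ^ 10 + 2 * ζ ^ 11, ?_⟩
    rw [hπ₁]
    linear_combination ((-5 : 𝓞 K) + 5 * ζ + (-3) * ζ ^ 2 - ζ ^ 3 + 2 * ζ ^ 4 - ζ ^ 5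
      + (-3) * ζ ^ 6 + 2 * ζ ^ 7) * hΦ
  have hd2 : π₂ ∣ ζ - 3 := by
    refine ⟨1 - ζ + 2 * ζ ^ 2 + (-2) * ζ ^ 3 - ζ ^ 4 + 2 * ζ ^ 6 - ζ ^ 7 - ζ ^ 9
      + 2 * ζ ^ 10, ?_⟩
    rw [hπ₂]
    linear_combination ((-2 : 𝓞 K) + 3 * ζ + (-2) * ζ ^ 2 - ζ ^ 3 - ζ ^ 4 + ζ ^ 6
      + (-2) * ζ ^ 7) * hΦ
  have hd7 : π₁ ∣ (7 : 𝓞 K) := ⟨π₁ ^ 5 * π₂ ^ 6 * dv, by linear_combination (-dv) * hA - 7 * hcd⟩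
  -- the span equality
  have hassoc : Associated (7 : 𝓞 K) (π₁ ^ 6 * π₂ ^ 6) :=
    ⟨Units.mkOfMulEqOne cv dv hcd, hA.symm⟩
  have hspan7 : Ideal.span {(7 : 𝓞 K)} = Ideal.span {π₁} ^ 6 * Ideal.span {π₂} ^ 6 := by
    rw [Ideal.span_singleton_pow, Ideal.span_singleton_pow,
      Ideal.span_singleton_mul_span_singleton]
    exact Ideal.span_singleton_eq_span_singleton.mpr hassoc
  -- transfer the root relation to K
  set z : K := algebraMap (𝓞 K) K ζ with hzdef
  have hζ' : IsPrimitiveRoot z 42 :=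
    hζ.map_of_injective (FaithfulSMul.algebraMap_injective (𝓞 K) K)
  have hζ'' : IsPrimitiveRoot z (42 : ℕ) := hζ'
  have hrootK : z ^ 12 + z ^ 11 - z ^ 9 - z ^ 8 + z ^ 6 - z ^ 4 - z ^ 3 + z + 1 = 0 := by
    have h0 := congrArg (algebraMap (𝓞 K) K) hΦ
    simp only [map_add, map_sub, map_pow, map_one, map_zero] at h0
    rw [hzdef]
    linear_combination h0
  -- norms of ζ - 3 and ζ - 5
  have hfr : Module.finrank ℚ K = 12 := by
    rw [IsCyclotomicExtension.finrank (n := (42 : ℕ)) K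
      (Polynomial.cyclotomic.irreducible_rat (by norm_num))]
    rfl
  have hnorm3 : Algebra.norm ℤ (ζ - 3) = 682969 := by
    have h := phi42_norm_aux K z hζ'' hrootK 3
    have hcast : algebraMap (𝓞 K) K (ζ - 3) = z - algebraMap ℚ K 3 := by
      rw [map_sub, map_ofNat, map_ofNat, hzdef]
    have hcoe : ((Algebra.norm ℤ (ζ - 3) : ℤ) : ℚ) =
        Algebra.norm ℚ (algebraMap (𝓞 K) K (ζ - 3)) := Algebra.coe_norm_int (ζ - 3)
    rw [hcast, h] at hcoe
    have hval : ((Algebra.norm ℤ (ζ - 3) : ℤ) : ℚ) = (682969 : ℚ) := by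
      rw [hcoe]; norm_num
    exact_mod_cast hval
  have hnorm5 : Algebra.norm ℤ (ζ - 5) = 290639881 := by
    have h := phi42_norm_aux K z hζ'' hrootK 5
    have hcast : algebraMap (𝓞 K) K (ζ - 5) = z - algebraMap ℚ K 5 := by
      rw [map_sub, map_ofNat, map_ofNat, hzdef]
    have hcoe : ((Algebra.norm ℤ (ζ - 5) : ℤ) : ℚ) =
        Algebra.norm ℚ (algebraMap (𝓞 K) K (ζ - 5)) := Algebra.coe_norm_int (ζ - 5)
    rw [hcast, h] at hcoe
    have hval : ((Algebra.norm ℤ (ζ - 5) : ℤ) : ℚ) = (290639881 : ℚ) := by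
      rw [hcoe]; norm_num
    exact_mod_cast hval
  -- absolute norms
  set a := Ideal.absNorm (Ideal.span {π₁}) with ha
  set b := Ideal.absNorm (Ideal.span {π₂}) with hb
  have habs7 : Ideal.absNorm (Ideal.span {(7 : 𝓞 K)}) = 7 ^ 12 := by
    rw [Ideal.absNorm_span_singleton]
    have h7 : (7 : 𝓞 K) = algebraMap ℤ (𝓞 K) 7 := by simp
    rw [h7, Algebra.norm_algebraMap_of_basis (Module.Free.chooseBasis ℤ (𝓞 K)),
      ← Module.finrank_eq_card_chooseBasisIndex, RingOfIntegers.rank K, hfr]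
    norm_num [Int.natAbs_pow]
  have hab : a ^ 6 * b ^ 6 = 7 ^ 12 := by
    have hcong := congrArg Ideal.absNorm hspan7
    rwa [habs7, map_mul, map_pow, map_pow, ← ha, ← hb, eq_comm] at hcong
  have habs_le5 : a ∣ 290639881 := by
    have hle : Ideal.span {ζ - 5} ≤ Ideal.span {π₁} :=
      Ideal.span_singleton_le_span_singleton.mpr hd1
    have hdvd := Ideal.absNorm_dvd_absNorm_of_le hle
    rw [Ideal.absNorm_span_singleton (ζ - 5), hnorm5] at hdvd
    rw [ha]
    simpa using hdvd
  have habs_le3 : b ∣ 682969 := by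
    have hle : Ideal.span {ζ - 3} ≤ Ideal.span {π₂} :=
      Ideal.span_singleton_le_span_singleton.mpr hd2
    have hdvd := Ideal.absNorm_dvd_absNorm_of_le hle
    rw [Ideal.absNorm_span_singleton (ζ - 3), hnorm3] at hdvd
    rw [hb]
    simpa using hdvd
  -- deduce a = b = 7
  have hadvd : a ∣ 7 ^ 12 :=
    hab ▸ dvd_mul_of_dvd_left (dvd_pow_self a (by norm_num)) (b ^ 6)
  have hbdvd : b ∣ 7 ^ 12 :=
    hab ▸ dvd_mul_of_dvd_right (dvd_pow_self b (by norm_num)) (a ^ 6)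
  obtain ⟨i, hi12, hai⟩ := (Nat.dvd_prime_pow (by norm_num)).mp hadvd
  obtain ⟨j, hj12, hbj⟩ := (Nat.dvd_prime_pow (by norm_num)).mp hbdvd
  have hi1 : i ≤ 1 := by
    by_contra hcon
    have h49 : (49 : ℕ) ∣ a := by
      rw [hai]
      calc (49 : ℕ) = 7 ^ 2 := by norm_num
      _ ∣ 7 ^ i := pow_dvd_pow 7 (by omega)
    exact (by norm_num : ¬ (49 : ℕ) ∣ 290639881) (h49.trans habs_le5)
  have hj1 : j ≤ 1 := by
    by_contra hcon
    have h49 : (49 : ℕ) ∣ b := by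
      rw [hbj]
      calc (49 : ℕ) = 7 ^ 2 := by norm_num
      _ ∣ 7 ^ j := pow_dvd_pow 7 (by omega)
    exact (by norm_num : ¬ (49 : ℕ) ∣ 682969) (h49.trans habs_le3)
  have hij : 6 * i + 6 * j = 12 := by
    have hpow : (7 : ℕ) ^ (6 * i + 6 * j) = 7 ^ 12 := by
      rw [pow_add, mul_comm 6 i, mul_comm 6 j, pow_mul, pow_mul, ← hai, ← hbj, hab]
    exact Nat.pow_right_injective (by norm_num) hpow
  have ha7 : a = 7 := by
    have hia : i = 1 := by omega
    rw [hai, hia, pow_one]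
  have hb7 : b = 7 := by
    have hja : j = 1 := by omega
    rw [hbj, hja, pow_one]
  -- maximality
  have hmax1 : (Ideal.span {π₁}).IsMaximal := by
    have hprime : (Ideal.span {π₁}).IsPrime :=
      Ideal.isPrime_of_irreducible_absNorm
        (by rw [← ha, ha7]; exact (Nat.irreducible_iff_nat_prime 7).mpr (by norm_num))
    refine hprime.isMaximal ?_
    intro hbot
    have h0 : a = 0 := by rw [ha, hbot, Ideal.absNorm_bot]
    omega
  have hmax2 : (Ideal.span {π₂}).IsMaximal := by
    have hprime : (Ideal.span {π₂}).IsPrime :=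
      Ideal.isPrime_of_irreducible_absNorm
        (by rw [← hb, hb7]; exact (Nat.irreducible_iff_nat_prime 7).mpr (by norm_num))
    refine hprime.isMaximal ?_
    intro hbot
    have h0 : b = 0 := by rw [hb, hbot, Ideal.absNorm_bot]
    omega
  -- the two primes are distinct
  have hne : Ideal.span {π₁} ≠ Ideal.span {π₂} := by
    intro heq
    have h3m : ζ - 3 ∈ Ideal.span {π₁} := by
      rw [heq]; exact Ideal.mem_span_singleton.mpr hd2
    have h5m : ζ - 5 ∈ Ideal.span {π₁} := Ideal.mem_span_singleton.mpr hd1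
    have h7m : (7 : 𝓞 K) ∈ Ideal.span {π₁} := Ideal.mem_span_singleton.mpr hd7
    have h2m : (2 : 𝓞 K) ∈ Ideal.span {π₁} := by
      have hsub := Ideal.sub_mem _ h3m h5m
      have h2 : (ζ - 3) - (ζ - 5) = (2 : 𝓞 K) := by ring
      rwa [h2] at hsub
    have h1m : (1 : 𝓞 K) ∈ Ideal.span {π₁} := by
      have hsub := Ideal.sub_mem _ h7m (Ideal.mul_mem_left _ 3 h2m)
      have h1 : (7 : 𝓞 K) - 3 * 2 = 1 := by norm_num
      rwa [h1] at hsub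
    have htop : Ideal.span {π₁} = ⊤ := Ideal.eq_top_of_isUnit_mem _ h1m isUnit_one
    have h1a : a = 1 := by rw [ha, htop, Ideal.absNorm_top]
    omega
  exact ⟨hne, hmax1, hmax2, hspan7⟩
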